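/- Let f : ℕ → ℕ be nondecreasing, unbounded, and recursively approximable from above, meaning there is a computable g : ℕ × ℕ → ℕ with g(n, s+1) ≤ g(n, s) for all n, s and lim_s g(n, s) = f(n) for each n. Then there exists a nonatomic Borel probability measure μ on 2^ℕ (i.e., μ({Z}) = 0 for every Z) such that C(μ↾n) ≤⁺ C(n) + f(n) and K(μ↾n) ≤⁺ K(n) + f(n). -/

import Mathlib

open MeasureTheory Filter

/-- Cantor space: the space of infinite binary sequences. -/
abbrev Cantor : Type := ℕ → Bool

/-- Finite binary strings. -/
abbrev BStr : Type := List Bool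

/-- The cylinder set of sequences extending the string `x`. -/
def cyl (x : BStr) : Set Cantor := {Z | ∀ i : Fin x.length, Z i.1 = x.get i}

/-- The string of the first `n` bits of `Z`. -/
def seg (Z : Cantor) (n : ℕ) : BStr := List.ofFn fun i : Fin n => Z i.1

/-- `lam` is the uniform (fair-coin product) measure: every cylinder `[x]`
has measure `2^{-|x|}`. -/
def IsUniform (lam : Measure Cantor) : Prop :=
  ∀ x : BStr, lam (cyl x) = (2 : ENNReal)⁻¹ ^ x.length

/-- `(G_m)` is a Martin-Löf test with respect to the measure `ρ`:
the sets `G_m` are uniformly effectively open and `ρ (G_m) ≤ 2^{-m}`. -/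
def IsMLTest (ρ : Measure Cantor) (G : ℕ → Set Cantor) : Prop :=
  (∃ σ : ℕ → ℕ → BStr, Computable₂ σ ∧ ∀ m, G m = ⋃ i, cyl (σ m i)) ∧
  ∀ m, ρ (G m) ≤ (2 : ENNReal)⁻¹ ^ m

/-- `μ` is Martin-Löf absolutely continuous in `ρ`: `inf_m μ(G_m) = 0`
for every `ρ`-Martin-Löf test `(G_m)`. -/
def MLAC (μ ρ : Measure Cantor) : Prop :=
  ∀ G : ℕ → Set Cantor, IsMLTest ρ G → ⨅ m, μ (G m) = 0

/-- `Z` is Martin-Löf random with respect to `lam`. -/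
def MLRandom (lam : Measure Cantor) (Z : Cantor) : Prop :=
  ∀ G : ℕ → Set Cantor, IsMLTest lam G → Z ∉ ⋂ m, G m

/-- `ρ` is a computable measure: `ρ [x]` is a computable real, uniformly in `x`. -/
def ComputableMeasure (ρ : Measure Cantor) : Prop :=
  ∃ q : BStr → ℕ → ℚ, Computable₂ q ∧
    ∀ x k, |(q x k : ℝ) - (ρ (cyl x)).toReal| ≤ (2 : ℝ)⁻¹ ^ k

/-- `U` is a universal plain machine. -/
def UniversalPlain (U : BStr →. BStr) : Prop :=
  Partrec U ∧ ∀ M : BStr →. BStr, Partrec M →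
    ∃ c : ℕ, ∀ p x, x ∈ M p → ∃ q : BStr, q.length ≤ p.length + c ∧ x ∈ U q

/-- The domain of `M` is an antichain under the prefix relation. -/
def PrefixFreeDom (M : BStr →. BStr) : Prop :=
  ∀ p q : BStr, (M p).Dom → (M q).Dom → p <+: q → p = q

/-- `U` is a universal prefix-free machine. -/
def UniversalPrefixFree (U : BStr →. BStr) : Prop :=
  Partrec U ∧ PrefixFreeDom U ∧
  ∀ M : BStr →. BStr, Partrec M → PrefixFreeDom M →
    ∃ c : ℕ, ∀ p x, x ∈ M p → ∃ q : BStr, q.length ≤ p.length + c ∧ x ∈ U q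

/-- Kolmogorov complexity of the string `x` with respect to the machine `U`:
the minimal length of a `U`-description of `x`. -/
noncomputable def cpx (U : BStr →. BStr) (x : BStr) : ℕ :=
  sInf {n | ∃ q : BStr, q.length = n ∧ x ∈ U q}

/-- A natural number `n` identified with the string `0^n`. -/
def numStr (n : ℕ) : BStr := List.replicate n false

/-- Complexity of the natural number `n` (i.e., of the string `0^n`). -/
noncomputable def cpxN (U : BStr →. BStr) (n : ℕ) : ℕ := cpx U (numStr n)

/-- The `μ`-average complexity of the strings of length `n`:
`Σ_{|x|=n} cpx(x) · μ[x]`. -/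
noncomputable def avgCpx (U : BStr →. BStr) (μ : Measure Cantor) (n : ℕ) : ℝ :=
  ∑ v : Fin n → Bool, (cpx U (List.ofFn v) : ℝ) * (μ (cyl (List.ofFn v))).toReal

/-- A measure `μ` is trivial for the complexity given by the machine `U`
(e.g. K-trivial when `U` is the universal prefix-free machine, C-trivial
when `U` is the universal plain machine). -/
def MeasTrivial (U : BStr →. BStr) (μ : Measure Cantor) : Prop :=
  ∃ c : ℝ, ∀ n : ℕ, avgCpx U μ n ≤ (cpxN U n : ℝ) + c

def List.get? {α : Type*} (l : List α) (n : ℕ) : Option α := l[n]?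

theorem List.get?_eq_getElem? {α : Type*} (l : List α) (n : ℕ) : l.get? n = l[n]? := rfl

theorem Computable.list_get? {α : Type*} [Primcodable α] : Computable₂ (@List.get? α) :=
  Computable.list_getElem?

open MeasureTheory Filter

namespace NTC

variable (f : ℕ → ℕ) (g : ℕ → ℕ → ℕ)

/-- least `p` with `f p ≥ 2(j+1)` -/
noncomputable def mstar (j : ℕ) : ℕ := sInf {p | 2*(j+1) ≤ f p}

/-- settling stage for marker `j` -/
noncomputable def Tj (j : ℕ) : ℕ :=
  sInf {s | mstar f j ≤ s ∧ ∀ p < mstar f j, g p s < 2*(j+1)}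

/-- running maximum of settling stages -/
noncomputable def maxT : ℕ → ℕ
  | 0 => Tj f g 0
  | j+1 => max (maxT j) (Tj f g (j+1))

/-- the split positions -/
noncomputable def Pj (j : ℕ) : ℕ := 2*(j+1) + maxT f g j

/-- number of split positions below `n` -/
noncomputable def hh (n : ℕ) : ℕ := sInf {h | n ≤ Pj f g h}

set_option linter.unusedSectionVars false
section hyp

variable (hmono : Monotone f) (hunb : ∀ b : ℕ, ∃ n, b < f n)
  (hanti : ∀ n s, g n (s + 1) ≤ g n s)
  (hlim : ∀ n, ∃ s₀, ∀ s ≥ s₀, g n s = f n)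

include hanti in
theorem gmono (p : ℕ) : Antitone (g p) :=
  antitone_nat_of_succ_le (fun s => hanti p s)



include hanti hlim in
theorem gf (p s : ℕ) : f p ≤ g p s := by
  obtain ⟨s₀, hs₀⟩ := hlim p
  calc f p = g p (max s s₀) := (hs₀ _ (le_max_right _ _)).symm
  _ ≤ g p s := gmono g hanti p (le_max_left _ _)

include hunb in
theorem mstar_set_nonempty (j : ℕ) : {p | 2*(j+1) ≤ f p}.Nonempty := by
  obtain ⟨n, hn⟩ := hunb (2*(j+1)); exact ⟨n, le_of_lt hn⟩

include hunb in
theorem mstar_spec (j : ℕ) : 2*(j+1) ≤ f (mstar f j) :=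
  Nat.sInf_mem (mstar_set_nonempty f hunb j)

theorem mstar_min {j p : ℕ} (h : p < mstar f j) : f p < 2*(j+1) := by
  have := Nat.notMem_of_lt_sInf h; simpa using this

include hmono hunb hanti hlim in
theorem Tset_nonempty (j : ℕ) :
    {s | mstar f j ≤ s ∧ ∀ p < mstar f j, g p s < 2*(j+1)}.Nonempty := by
  classical
  set m := mstar f j
  have : ∀ p, ∃ s₀, ∀ s ≥ s₀, g p s = f p := hlim
  choose s₀ hs₀ using this
  refine ⟨max m ((Finset.range m).sup s₀), le_max_left _ _, ?_⟩
  intro p hp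
  have h1 : s₀ p ≤ (Finset.range m).sup s₀ := Finset.le_sup (Finset.mem_range.mpr hp)
  have h2 : g p (max m ((Finset.range m).sup s₀)) = f p :=
    hs₀ p _ (le_trans h1 (le_max_right _ _))
  rw [h2]
  exact mstar_min f hp

include hmono hunb hanti hlim in
theorem Tj_spec (j : ℕ) :
    mstar f j ≤ Tj f g j ∧ ∀ p < mstar f j, g p (Tj f g j) < 2*(j+1) :=
  Nat.sInf_mem (Tset_nonempty f g hmono hunb hanti hlim j)

theorem Tj_min {j s : ℕ} (h : s < Tj f g j) :
    ¬(mstar f j ≤ s ∧ ∀ p < mstar f j, g p s < 2*(j+1)) := by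
  have := Nat.notMem_of_lt_sInf h; simpa using this

include hmono hunb hanti hlim in
theorem T_stab {j s : ℕ} (hs : Tj f g j ≤ s) :
    ∀ p < mstar f j, g p s < 2*(j+1) := fun p hp =>
  lt_of_le_of_lt (gmono g hanti p hs) ((Tj_spec f g hmono hunb hanti hlim j).2 p hp)

theorem maxT_le_maxT : Monotone (maxT f g) := by
  apply monotone_nat_of_le_succ
  intro j; exact le_max_left _ _

theorem Tj_le_maxT {i j : ℕ} (h : i ≤ j) : Tj f g i ≤ maxT f g j := by
  calc Tj f g i ≤ maxT f g i := by cases i with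
        | zero => exact le_refl _
        | succ k => exact le_max_right _ _
  _ ≤ maxT f g j := maxT_le_maxT f g h

theorem Pj_strictMono : StrictMono (Pj f g) := by
  apply strictMono_nat_of_lt_succ
  intro j
  have : maxT f g j ≤ maxT f g (j+1) := maxT_le_maxT f g (by omega)
  unfold Pj; omega

theorem Tj_le_Pj {i j : ℕ} (h : i ≤ j) : Tj f g i ≤ Pj f g j :=
  le_trans (Tj_le_maxT f g h) (by unfold Pj; omega)

include hmono hunb hanti hlim in
theorem mstar_le_Tj (j : ℕ) : mstar f j ≤ Tj f g j :=
  (Tj_spec f g hmono hunb hanti hlim j).1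

theorem Pj_lower (j : ℕ) : 2*(j+1) ≤ Pj f g j := by unfold Pj; omega

theorem hh_set_nonempty (n : ℕ) : {h | n ≤ Pj f g h}.Nonempty :=
  ⟨n, le_trans (by omega) (Pj_lower f g n)⟩

theorem hh_iff {n j : ℕ} : j < hh f g n ↔ Pj f g j < n := by
  constructor
  · intro h
    have := Nat.notMem_of_lt_sInf h
    simpa using this
  · intro h
    by_contra hc
    push_neg at hc
    have h2 : n ≤ Pj f g (hh f g n) := Nat.sInf_mem (hh_set_nonempty f g n)
    have := (Pj_strictMono f g).monotone hc
    omega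

include hmono hunb hanti hlim in
theorem f_ge_two_hh (n : ℕ) : 2 * hh f g n ≤ f n := by
  rcases Nat.eq_zero_or_pos (hh f g n) with h | h
  · omega
  · obtain ⟨j, hj⟩ : ∃ j, hh f g n = j + 1 := ⟨hh f g n - 1, by omega⟩
    have hPj : Pj f g j < n := (hh_iff f g).mp (by omega)
    have hm : mstar f j ≤ Pj f g j :=
      le_trans (mstar_le_Tj f g hmono hunb hanti hlim j) (Tj_le_Pj f g (le_refl j))
    have := mstar_spec f hunb j
    have := hmono (show mstar f j ≤ n by omega)
    omega

include hmono hunb hanti hlim in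
theorem hh_unbounded (k : ℕ) : k + 1 ≤ hh f g (Pj f g k + 1) := by
  have : Pj f g k < Pj f g k + 1 := by omega
  have := (hh_iff f g (n := Pj f g k + 1) (j := k)).mpr this
  omega

end hyp
end NTC

open MeasureTheory Filter Set

namespace NTC2

/-- the `j`-th binary digit of a real number in `[0,1)` -/
noncomputable def digit (j : ℕ) (r : ℝ) : Bool := decide (⌊r * 2^(j+1)⌋ % 2 = 1)

theorem measurable_digit (j : ℕ) : Measurable (digit j) := by
  have h1 : Measurable fun r : ℝ => r * 2^(j+1) := measurable_id.mul_const _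
  have h2 : Measurable fun r : ℝ => ⌊r * 2^(j+1)⌋ := h1.floor
  exact (Measurable.of_discrete (f := fun z : ℤ => decide (z % 2 = 1))).comp h2

/-- The set of reals in `[0,1)` with prescribed first `h` digits is inside a
dyadic interval of length `2^{-h}`. -/
theorem dyadic_subset (b : ℕ → Bool) :
    ∀ h : ℕ, ∃ A : ℕ,
      {r : ℝ | r ∈ Ico (0:ℝ) 1 ∧ ∀ j < h, digit j r = b j} ⊆
        {r : ℝ | (A:ℝ) ≤ r * 2^h ∧ r * 2^h < A+1} := by
  intro h
  induction h with
  | zero =>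
    refine ⟨0, fun r hr => ?_⟩
    obtain ⟨⟨h0, h1⟩, -⟩ := hr
    constructor <;> simp <;> linarith
  | succ h ih =>
    obtain ⟨A, hA⟩ := ih
    have key : ∀ r : ℝ, (A:ℝ) ≤ r * 2^h → r * 2^h < A+1 →
        (digit h r = true ↔ (2*(A:ℝ)+1) ≤ r * 2^(h+1)) := by
      intro r hy1 hy2
      have hx : r * 2^(h+1) = 2 * (r * 2^h) := by ring
      have hx1 : (2*(A:ℝ)) ≤ r * 2^(h+1) := by rw [hx]; linarith
      have hx2 : r * 2^(h+1) < 2*(A:ℝ)+2 := by rw [hx]; linarith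
      constructor
      · intro hd
        by_contra hc
        push_neg at hc
        have hfl : ⌊r * 2^(h+1)⌋ = 2*(A:ℤ) := by
          rw [Int.floor_eq_iff]
          constructor
          · push_cast; linarith
          · push_cast; linarith
        unfold digit at hd
        rw [hfl] at hd
        simp at hd
      · intro hge
        have hfl : ⌊r * 2^(h+1)⌋ = 2*(A:ℤ)+1 := by
          rw [Int.floor_eq_iff]
          constructor
          · push_cast; linarith
          · push_cast; linarith
        unfold digit
        rw [hfl]
        simp
    by_cases hb : b h = true
    · refine ⟨2*A+1, fun r hr => ?_⟩
      obtain ⟨hr1, hr2⟩ := hr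
      obtain ⟨hy1, hy2⟩ := hA ⟨hr1, fun j hj => hr2 j (by omega)⟩
      have hd : digit h r = true := by rw [hr2 h (by omega), hb]
      have hge := (key r hy1 hy2).mp hd
      have hx : r * 2^(h+1) = 2 * (r * 2^h) := by ring
      constructor
      · push_cast; linarith
      · push_cast; rw [hx]; linarith
    · refine ⟨2*A, fun r hr => ?_⟩
      obtain ⟨hr1, hr2⟩ := hr
      obtain ⟨hy1, hy2⟩ := hA ⟨hr1, fun j hj => hr2 j (by omega)⟩
      have hd : digit h r ≠ true := by rw [hr2 h (by omega)]; simpa using hb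
      have hlt : r * 2^(h+1) < 2*(A:ℝ)+1 := by
        by_contra hc
        push_neg at hc
        exact hd ((key r hy1 hy2).mpr hc)
      have hx : r * 2^(h+1) = 2 * (r * 2^h) := by ring
      constructor
      · push_cast; rw [hx]; linarith
      · push_cast; linarith

theorem vol_digits_le (b : ℕ → Bool) (h : ℕ) :
    volume {r : ℝ | r ∈ Ico (0:ℝ) 1 ∧ ∀ j < h, digit j r = b j} ≤ 2⁻¹ ^ h := by
  obtain ⟨A, hA⟩ := dyadic_subset b h
  have hpow : (0:ℝ) < 2^h := by positivity
  have hset : {r : ℝ | (A:ℝ) ≤ r * 2^h ∧ r * 2^h < A+1} =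
      Ico ((A:ℝ)/2^h) (((A:ℝ)+1)/2^h) := by
    ext r
    simp only [mem_setOf_eq, mem_Ico]
    rw [div_le_iff₀ hpow, lt_div_iff₀ hpow]
  calc volume {r : ℝ | r ∈ Ico (0:ℝ) 1 ∧ ∀ j < h, digit j r = b j}
      ≤ volume {r : ℝ | (A:ℝ) ≤ r * 2^h ∧ r * 2^h < A+1} := measure_mono hA
    _ = ENNReal.ofReal (((A:ℝ)+1)/2^h - (A:ℝ)/2^h) := by rw [hset, Real.volume_Ico]
    _ = ENNReal.ofReal ((1/2)^h) := by
        congr 1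
        field_simp
        rw [← mul_pow]; norm_num
    _ = 2⁻¹ ^ h := by
        rw [ENNReal.ofReal_pow (by norm_num)]
        congr 1
        rw [one_div]
        rw [ENNReal.ofReal_inv_of_pos (by norm_num)]
        norm_num

end NTC2

namespace NTC

open MeasureTheory Filter Set NTC2

variable (f : ℕ → ℕ) (g : ℕ → ℕ → ℕ)

open Classical in
/-- embed digits of a real into the split positions -/
noncomputable def Gmap (r : ℝ) : Cantor := fun i =>
  if h : ∃ j, Pj f g j = i then digit h.choose r else false

theorem Gmap_at (r : ℝ) (j : ℕ) : Gmap f g r (Pj f g j) = digit j r := by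
  unfold Gmap
  rw [dif_pos ⟨j, rfl⟩]
  congr 1
  exact (Pj_strictMono f g).injective (Exists.choose_spec (⟨j, rfl⟩ : ∃ j', Pj f g j' = Pj f g j))

theorem Gmap_off (r : ℝ) {i : ℕ} (h : ∀ j, Pj f g j ≠ i) : Gmap f g r i = false := by
  unfold Gmap
  rw [dif_neg]
  push_neg
  exact h

theorem measurable_Gmap : Measurable (Gmap f g) := by
  apply measurable_pi_lambda
  intro i
  unfold Gmap
  by_cases h : ∃ j, Pj f g j = i
  · simp only [dif_pos h]
    exact measurable_digit _
  · simp only [dif_neg h]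
    exact measurable_const

/-- the measure: random digits placed at the split positions, `false` elsewhere -/
noncomputable def mu : Measure Cantor :=
  Measure.map (Gmap f g) (volume.restrict (Ico (0:ℝ) 1))

theorem mu_prob : IsProbabilityMeasure (mu f g) := by
  have : IsProbabilityMeasure (volume.restrict (Ico (0:ℝ) 1)) := by
    constructor
    rw [Measure.restrict_apply_univ, Real.volume_Ico]
    norm_num
  exact Measure.isProbabilityMeasure_map (measurable_Gmap f g).aemeasurable

theorem measurable_cyl (x : BStr) : MeasurableSet (cyl x) := by
  have : cyl x = ⋂ i : Fin x.length, (fun Z : Cantor => Z i.1) ⁻¹' {x.get i} := by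
    ext Z; simp [cyl, Set.mem_iInter]
  rw [this]
  exact MeasurableSet.iInter fun i => (measurable_pi_apply i.1) (measurableSet_singleton _)

/-- a string is supported if its `true` bits sit on split positions -/
def Supported (x : BStr) : Prop := ∀ i : Fin x.length, x.get i = true → ∃ j, Pj f g j = i.1

theorem mu_cyl_unsupported {x : BStr} (h : ¬Supported f g x) : mu f g (cyl x) = 0 := by
  unfold mu
  rw [Measure.map_apply (measurable_Gmap f g) (measurable_cyl x)]
  unfold Supported at h
  push_neg at h
  obtain ⟨i, hi, hnj⟩ := h
  have : Gmap f g ⁻¹' cyl x = ∅ := by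
    ext r
    simp only [Set.mem_preimage, Set.mem_empty_iff_false, iff_false]
    intro hr
    have h1 := hr i
    rw [Gmap_off f g r hnj] at h1
    rw [← h1] at hi
    simp at hi
  rw [this]
  simp

theorem mu_cyl_le (x : BStr) : mu f g (cyl x) ≤ 2⁻¹ ^ (hh f g x.length) := by
  by_cases hs : Supported f g x
  · unfold mu
    rw [Measure.map_apply (measurable_Gmap f g) (measurable_cyl x)]
    rw [Measure.restrict_apply']
    swap
    · exact measurableSet_Ico
    set n := x.length
    set b : ℕ → Bool := fun j => if hj : Pj f g j < n then x.get ⟨Pj f g j, hj⟩ else false with hb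
    calc volume (Gmap f g ⁻¹' cyl x ∩ Ico (0:ℝ) 1)
        ≤ volume {r : ℝ | r ∈ Ico (0:ℝ) 1 ∧ ∀ j < hh f g n, digit j r = b j} := by
          apply measure_mono
          rintro r ⟨hr1, hr2⟩
          refine ⟨hr2, fun j hj => ?_⟩
          have hPj : Pj f g j < n := (hh_iff f g).mp hj
          have := hr1 ⟨Pj f g j, hPj⟩
          rw [Gmap_at f g r j] at this
          rw [this, hb]
          simp only [dif_pos hPj]
      _ ≤ 2⁻¹ ^ (hh f g n) := vol_digits_le b _
  · rw [mu_cyl_unsupported f g hs]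
    exact zero_le'

theorem Z_mem_cyl_seg (Z : Cantor) (N : ℕ) : Z ∈ cyl (seg Z N) := by
  intro i
  rw [List.get_eq_getElem]
  simp [seg]

section hyp
variable (hmono : Monotone f) (hunb : ∀ b : ℕ, ∃ n, b < f n)
  (hanti : ∀ n s, g n (s + 1) ≤ g n s)
  (hlim : ∀ n, ∃ s₀, ∀ s ≥ s₀, g n s = f n)

include hmono hunb hanti hlim in
theorem mu_singleton (Z : Cantor) : mu f g {Z} = 0 := by
  by_contra h0
  obtain ⟨k, hk⟩ := ENNReal.exists_inv_two_pow_lt h0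
  have hle : mu f g {Z} ≤ 2⁻¹ ^ k := by
    set N := Pj f g k + 1
    have h1 : mu f g {Z} ≤ mu f g (cyl (seg Z N)) := by
      apply measure_mono
      intro W hW
      rw [Set.mem_singleton_iff] at hW
      rw [hW]
      exact Z_mem_cyl_seg Z N
    have h2 := mu_cyl_le f g (seg Z N)
    have hlen : (seg Z N).length = N := by unfold seg; simp; rfl
    rw [hlen] at h2
    have h3 : k + 1 ≤ hh f g N := hh_unbounded f g hmono hunb hanti hlim k
    have h4 : (2⁻¹ : ENNReal) ^ (hh f g N) ≤ 2⁻¹ ^ k :=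
      pow_le_pow_of_le_one zero_le' (by norm_num) (by omega)
    exact le_trans h1 (le_trans h2 h4)
  exact absurd (lt_of_le_of_lt hle hk) (lt_irrefl _)

end hyp

theorem cyl_disjoint {n : ℕ} {v w : Fin n → Bool} (hvw : v ≠ w) :
    Disjoint (cyl (List.ofFn v)) (cyl (List.ofFn w)) := by
  rw [Set.disjoint_left]
  intro Z hv hw
  apply hvw
  funext i
  have h1 := hv (Fin.cast (List.length_ofFn (f := v)).symm i)
  have h2 := hw (Fin.cast (List.length_ofFn (f := w)).symm i)
  rw [List.get_ofFn] at h1 h2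
  simp at h1 h2
  rw [← h1, ← h2]

theorem mu_sum_le (n : ℕ) :
    ∑ v : Fin n → Bool, mu f g (cyl (List.ofFn v)) ≤ 1 := by
  have hdisj : Pairwise (Function.onFun Disjoint fun v : Fin n → Bool => cyl (List.ofFn v)) :=
    fun v w hvw => cyl_disjoint hvw
  have := measure_iUnion (μ := mu f g) hdisj (fun v => measurable_cyl _)
  rw [tsum_fintype] at this
  rw [← this]
  have : IsProbabilityMeasure (mu f g) := mu_prob f g
  exact prob_le_one

end NTC

namespace NTC
set_option linter.unusedSectionVars false

section bfind
variable {α : Type*} {β : Type*} [Primcodable α] [Primcodable β]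

/-- bounded search: least `k < N` with `F a k = true` -/
def bfind (F : α → ℕ → Bool) (a : α) (N : ℕ) : Option ℕ :=
  Nat.rec none (fun k ih => Option.casesOn ih (cond (F a k) (some k) none) some) N

theorem bfind_zero (F : α → ℕ → Bool) (a : α) : bfind F a 0 = none := rfl

theorem bfind_succ (F : α → ℕ → Bool) (a : α) (N : ℕ) :
    bfind F a (N+1) =
      Option.casesOn (bfind F a N) (cond (F a N) (some N) none) some := rfl

theorem bfind_none_iff (F : α → ℕ → Bool) (a : α) :
    ∀ N, bfind F a N = none ↔ ∀ k < N, F a k = false := by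
  intro N
  induction N with
  | zero => simp [bfind_zero]
  | succ N ih =>
    rw [bfind_succ]
    cases hb : bfind F a N with
    | none =>
      cases hF : F a N with
      | false =>
        simp only [Option.casesOn]
        constructor
        · intro _ k hk
          rcases Nat.lt_succ_iff_lt_or_eq.mp hk with h | h
          · exact (ih.mp hb) k h
          · rw [h]; exact hF
        · intro _; simp [hF]
      | true =>
        simp only [Option.casesOn]
        constructor
        · intro h; simp [hF] at h
        · intro h
          exact absurd (h N (Nat.lt_succ_self N)) (by simp [hF])
    | some v =>
      simp only [Option.casesOn]
      constructor
      · intro h; simp at h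
      · intro h
        have : bfind F a N = none := (ih.mpr (fun k hk => h k (by omega)))
        rw [hb] at this; simp at this

theorem bfind_some (F : α → ℕ → Bool) (a : α) :
    ∀ N k, bfind F a N = some k → k < N ∧ F a k = true ∧ ∀ j < k, F a j = false := by
  intro N
  induction N with
  | zero => intro k h; simp [bfind_zero] at h
  | succ N ih =>
    intro k h
    rw [bfind_succ] at h
    cases hb : bfind F a N with
    | none =>
      rw [hb] at h
      simp only [Option.casesOn] at h
      cases hF : F a N with
      | false => rw [hF] at h; simp at h
      | true =>
        rw [hF] at h; simp at h
        subst h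
        exact ⟨Nat.lt_succ_self N, hF, (bfind_none_iff F a N).mp hb⟩
    | some v =>
      rw [hb] at h
      simp only [Option.casesOn] at h
      simp at h
      subst h
      obtain ⟨h1, h2, h3⟩ := ih v hb
      exact ⟨by omega, h2, h3⟩

theorem bfind_some_of (F : α → ℕ → Bool) (a : α) {N k : ℕ} (hk : k < N) (hF : F a k = true)
    (hmin : ∀ j < k, F a j = false) : bfind F a N = some k := by
  induction N with
  | zero => omega
  | succ N ih =>
    rw [bfind_succ]
    rcases Nat.lt_succ_iff_lt_or_eq.mp hk with h | h
    · rw [ih h]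
    · subst h
      rw [(bfind_none_iff F a k).mpr hmin]
      simp [hF]

theorem bfind_computable {F : α → ℕ → Bool} (hF : Computable₂ F) :
    Computable₂ (bfind F) := by
  have := Computable.nat_rec (f := fun p : α × ℕ => p.2)
    (g := fun _ : α × ℕ => (none : Option ℕ))
    (h := fun (p : α × ℕ) (q : ℕ × Option ℕ) =>
      Option.casesOn q.2 (cond (F p.1 q.1) (some q.1) none) some)
    Computable.snd (Computable.const none) ?hh
  · exact Computable₂.mk this
  case hh =>
    have H : Computable fun x : (α × ℕ) × ℕ × Option ℕ =>
        Option.casesOn (motive := fun _ => Option ℕ) x.2.2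
          (cond (F x.1.1 x.2.1) (some x.2.1) none) (fun v => some v) := by
      apply Computable.option_casesOn (o := fun x : (α × ℕ) × ℕ × Option ℕ => x.2.2)
        (Computable.snd.comp Computable.snd)
      · apply Computable.cond
        · exact hF.comp (Computable.fst.comp Computable.fst) (Computable.fst.comp Computable.snd)
        · exact Computable.option_some.comp (Computable.fst.comp Computable.snd)
        · exact Computable.const none
      · exact (Computable.option_some.comp Computable.snd).to₂
    exact H

/-- bounded tabulation: `[F a 0, ..., F a (N-1)]` -/
def buildL (F : α → ℕ → β) (a : α) (N : ℕ) : List β :=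
  Nat.rec [] (fun t ih => ih ++ [F a t]) N

theorem buildL_eq (F : α → ℕ → β) (a : α) : ∀ N, buildL F a N = (List.range N).map (F a) := by
  intro N
  induction N with
  | zero => rfl
  | succ N ih =>
    show buildL F a N ++ [F a N] = _
    rw [List.range_succ, List.map_append, ih]
    rfl

theorem buildL_computable {F : α → ℕ → β} (hF : Computable₂ F) :
    Computable₂ (buildL F) := by
  have := Computable.nat_rec (f := fun p : α × ℕ => p.2)
    (g := fun _ : α × ℕ => ([] : List β))
    (h := fun (p : α × ℕ) (q : ℕ × List β) => q.2 ++ [F p.1 q.1])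
    Computable.snd (Computable.const []) ?hh
  · exact Computable₂.mk this
  case hh =>
    have H : Computable fun x : (α × ℕ) × ℕ × List β => x.2.2 ++ [F x.1.1 x.2.1] := by
      apply Computable.list_append.comp (Computable.snd.comp Computable.snd)
      exact (Computable.list_cons.comp
        (hF.comp (Computable.fst.comp Computable.fst) (Computable.fst.comp Computable.snd))
        (Computable.const []))
    exact H

end bfind

end NTC

namespace NTC
set_option linter.unusedSectionVars false
set_option maxHeartbeats 2000000

section decoder

variable (f : ℕ → ℕ) (g : ℕ → ℕ → ℕ)

/-- test `2(j+1) ≤ g p s` with argument `((j,s), p)` -/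
def Fg : (ℕ × ℕ) → ℕ → Bool := fun q p => decide (2*(q.1+1) ≤ g p q.2)

/-- least `p ≤ n` with `2(j+1) ≤ g p n` -/
def findm (j n : ℕ) : Option ℕ := bfind (Fg g) (j, n) (n+1)

/-- do all `p < m` satisfy `g p s < 2(j+1)`? -/
def allb (j m s : ℕ) : Bool :=
  Option.casesOn (bfind (Fg g) (j, s) m) true (fun _ => false)

/-- test for the settling stage -/
def FT : (ℕ × ℕ) → ℕ → Bool := fun q s => cond (decide (q.2 ≤ s)) (allb g q.1 q.2 s) false

/-- computed settling stage bounded by `n` -/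
def findT (j n : ℕ) : Option ℕ := (findm g j n).bind fun m => bfind (FT g) (j, m) (n+1)

/-- the list of the first `h` split positions, with running maximum of settling
stages, as computed from data below `n` -/
def posList (n h : ℕ) : Option (List ℕ × ℕ) :=
  Nat.rec (some ([], 0)) (fun i ih => ih.bind fun lm => (findT g i n).map fun T =>
    (lm.1 ++ [2*(i+1) + max lm.2 T], max lm.2 T)) h

/-- membership test: `l.get? j = some t`, argument `((l,t), j)` -/
def FB : (List ℕ × ℕ) → ℕ → Bool := fun q j => decide (q.1.get? j = some q.2)

/-- the bit to place at position `t` -/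
def bitAt (l : List ℕ) (w : List Bool) (t : ℕ) : Bool :=
  Option.casesOn (bfind FB (l, t) l.length) false (fun j => (w.get? j).getD false)

/-- the decoded string of length `n` with data bits `w` at the split positions -/
def dec (w : List Bool) (n : ℕ) : List Bool :=
  buildL (fun (q : List ℕ × List Bool) t => bitAt q.1 q.2 t)
    (((posList g n w.length).getD ([], 0)).1, w) n

variable {g}

theorem Fg_computable (hg : Computable₂ g) : Computable₂ (Fg g) := by
  have h1 : Computable fun x : (ℕ × ℕ) × ℕ => 2*(x.1.1+1) :=
    (Primrec.nat_mul.comp (Primrec.const 2)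
      (Primrec.succ.comp (Primrec.fst.comp Primrec.fst))).to_comp
  have h2 : Computable fun x : (ℕ × ℕ) × ℕ => g x.2 x.1.2 :=
    hg.comp Computable.snd (Computable.snd.comp Computable.fst)
  have H : Computable fun x : (ℕ × ℕ) × ℕ => decide (2*(x.1.1+1) ≤ g x.2 x.1.2) :=
    Primrec.nat_le.decide.to_comp.comp h1 h2
  exact H

theorem findm_computable (hg : Computable₂ g) : Computable₂ (findm g) := by
  have H : Computable fun p : ℕ × ℕ => bfind (Fg g) (p.1, p.2) (p.2+1) :=
    (bfind_computable (Fg_computable hg)).comp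
      (Computable.fst.pair Computable.snd)
      (Computable.succ.comp Computable.snd)
  exact H

theorem FT_computable (hg : Computable₂ g) : Computable₂ (FT g) := by
  have hallb : Computable fun x : (ℕ × ℕ) × ℕ => allb g x.1.1 x.1.2 x.2 := by
    apply Computable.option_casesOn
      (o := fun x : (ℕ × ℕ) × ℕ => bfind (Fg g) (x.1.1, x.2) x.1.2)
    · exact (bfind_computable (Fg_computable hg)).comp
        ((Computable.fst.comp Computable.fst).pair Computable.snd)
        (Computable.snd.comp Computable.fst)
    · exact Computable.const true
    · exact (Computable.const false).to₂
  have H : Computable fun x : (ℕ × ℕ) × ℕ =>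
      cond (decide (x.1.2 ≤ x.2)) (allb g x.1.1 x.1.2 x.2) false := by
    apply Computable.cond
    · exact Primrec.nat_le.decide.to_comp.comp (Computable.snd.comp Computable.fst) Computable.snd
    · exact hallb
    · exact Computable.const false
  exact H

theorem findT_computable (hg : Computable₂ g) : Computable₂ (findT g) := by
  have H : Computable fun p : ℕ × ℕ =>
      (findm g p.1 p.2).bind fun m => bfind (FT g) (p.1, m) (p.2+1) := by
    apply Computable.option_bind (findm_computable hg)
    exact ((bfind_computable (FT_computable hg)).comp
      ((Computable.fst.comp Computable.fst).pair Computable.snd)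
      (Computable.succ.comp (Computable.snd.comp Computable.fst))).to₂
  exact H

theorem posList_computable (hg : Computable₂ g) : Computable₂ (posList g) := by
  have H := Computable.nat_rec (f := fun p : ℕ × ℕ => p.2)
    (g := fun _ : ℕ × ℕ => (some (([] : List ℕ), 0) : Option (List ℕ × ℕ)))
    (h := fun (p : ℕ × ℕ) (q : ℕ × Option (List ℕ × ℕ)) =>
      q.2.bind fun lm => (findT g q.1 p.1).map fun T =>
        (lm.1 ++ [2*(q.1+1) + max lm.2 T], max lm.2 T))
    Computable.snd (Computable.const _) ?hh
  · exact H
  case hh =>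
    have H2 : Computable fun x : (ℕ × ℕ) × ℕ × Option (List ℕ × ℕ) =>
        x.2.2.bind fun lm => (findT g x.2.1 x.1.1).map fun T =>
          (lm.1 ++ [2*(x.2.1+1) + max lm.2 T], max lm.2 T) := by
      apply Computable.option_bind (Computable.snd.comp Computable.snd)
      have H3 : Computable fun y : ((ℕ × ℕ) × ℕ × Option (List ℕ × ℕ)) × List ℕ × ℕ =>
          (findT g y.1.2.1 y.1.1.1).map fun T =>
            (y.2.1 ++ [2*(y.1.2.1+1) + max y.2.2 T], max y.2.2 T) := by
        apply Computable.option_map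
          (f := fun y : ((ℕ × ℕ) × ℕ × Option (List ℕ × ℕ)) × List ℕ × ℕ =>
            findT g y.1.2.1 y.1.1.1)
        · exact (findT_computable hg).comp
            (Computable.fst.comp (Computable.snd.comp Computable.fst))
            (Computable.fst.comp (Computable.fst.comp Computable.fst))
        · have hmax : Computable
              fun z : (((ℕ × ℕ) × ℕ × Option (List ℕ × ℕ)) × List ℕ × ℕ) × ℕ =>
              max z.1.2.2 z.2 :=
            Primrec.nat_max.to_comp.comp
              (Computable.snd.comp (Computable.snd.comp Computable.fst)) Computable.snd
          have H4 : Computable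
              fun z : (((ℕ × ℕ) × ℕ × Option (List ℕ × ℕ)) × List ℕ × ℕ) × ℕ =>
              (z.1.2.1 ++ [2*(z.1.1.2.1+1) + max z.1.2.2 z.2], max z.1.2.2 z.2) := by
            apply Computable.pair
            · apply Computable.list_append.comp
                (Computable.fst.comp (Computable.snd.comp Computable.fst))
              apply Computable.list_cons.comp _ (Computable.const [])
              apply Primrec.nat_add.to_comp.comp _ hmax
              exact (Primrec.nat_mul.comp (Primrec.const 2) (Primrec.succ.comp
                (Primrec.fst.comp (Primrec.snd.comp
                  (Primrec.fst.comp Primrec.fst))))).to_comp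
            · exact hmax
          exact H4
      exact H3
    exact H2

theorem FB_computable : Computable₂ FB := by
  have H : Computable fun x : (List ℕ × ℕ) × ℕ => decide (x.1.1.get? x.2 = some x.1.2) := by
    apply Primrec.eq.decide.to_comp.comp
    · exact Computable.list_get?.comp (Computable.fst.comp Computable.fst) Computable.snd
    · exact Computable.option_some.comp (Computable.snd.comp Computable.fst)
  exact H

theorem bitAt_computable :
    Computable fun x : (List ℕ × List Bool) × ℕ => bitAt x.1.1 x.1.2 x.2 := by
  apply Computable.option_casesOn
    (o := fun x : (List ℕ × List Bool) × ℕ => bfind FB (x.1.1, x.2) x.1.1.length)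
  · exact (bfind_computable FB_computable).comp
      (((Computable.fst.comp Computable.fst)).pair Computable.snd)
      (Computable.list_length.comp (Computable.fst.comp Computable.fst))
  · exact Computable.const false
  · have H5 : Computable fun y : ((List ℕ × List Bool) × ℕ) × ℕ =>
        (y.1.1.2.get? y.2).getD false := by
      apply Computable.option_getD
      · exact Computable.list_get?.comp
          (Computable.snd.comp (Computable.fst.comp Computable.fst)) Computable.snd
      · exact Computable.const false
    exact H5

theorem dec_computable (hg : Computable₂ g) : Computable₂ (dec g) := by
  have H : Computable fun p : List Bool × ℕ =>
      buildL (fun (q : List ℕ × List Bool) t => bitAt q.1 q.2 t)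
        (((posList g p.2 p.1.length).getD ([], 0)).1, p.1) p.2 := by
    apply (buildL_computable (Computable₂.mk bitAt_computable)).comp _ Computable.snd
    apply Computable.pair
    · apply Computable.fst.comp
      apply Computable.option_getD
      · exact (posList_computable hg).comp Computable.snd
          (Computable.list_length.comp Computable.fst)
      · exact Computable.const _
    · exact Computable.fst
  exact H

end decoder
end NTC

namespace NTC
set_option linter.unusedSectionVars false
set_option maxHeartbeats 1000000

section correctness

variable (f : ℕ → ℕ) (g : ℕ → ℕ → ℕ)
variable (hmono : Monotone f) (hunb : ∀ b : ℕ, ∃ n, b < f n)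
  (hanti : ∀ n s, g n (s + 1) ≤ g n s)
  (hlim : ∀ n, ∃ s₀, ∀ s ≥ s₀, g n s = f n)

include hmono hunb hanti hlim

theorem findm_eq {j n : ℕ} (hn : Tj f g j ≤ n) : findm g j n = some (mstar f j) := by
  apply bfind_some_of
  · have := mstar_le_Tj f g hmono hunb hanti hlim j; omega
  · simp only [Fg, decide_eq_true_eq]
    exact le_trans (mstar_spec f hunb j) (gf f g hanti hlim (mstar f j) n)
  · intro p hp
    simp only [Fg, decide_eq_false_iff_not, not_le]
    exact T_stab f g hmono hunb hanti hlim hn p hp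

omit hmono hunb hanti hlim in
theorem allb_iff (j m s : ℕ) : allb g j m s = true ↔ ∀ p < m, g p s < 2*(j+1) := by
  unfold allb
  cases hb : bfind (Fg g) (j, s) m with
  | none =>
    simp only [Option.casesOn, true_iff]
    intro p hp
    have := (bfind_none_iff (Fg g) (j,s) m).mp hb p hp
    simp only [Fg, decide_eq_false_iff_not, not_le] at this
    exact this
  | some v =>
    simp only [Option.casesOn]
    constructor
    · intro h; simp at h
    · intro h
      obtain ⟨h1, h2, _⟩ := bfind_some (Fg g) (j,s) m v hb
      simp only [Fg, decide_eq_true_eq] at h2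
      have := h v h1
      omega

theorem findT_eq {j n : ℕ} (hn : Tj f g j ≤ n) : findT g j n = some (Tj f g j) := by
  unfold findT
  rw [findm_eq f g hmono hunb hanti hlim hn]
  show bfind (FT g) (j, mstar f j) (n+1) = _
  apply bfind_some_of
  · omega
  · obtain ⟨h1, h2⟩ := Tj_spec f g hmono hunb hanti hlim j
    simp only [FT]
    rw [decide_eq_true h1]
    simp only [cond_true]
    exact (allb_iff g j _ _).mpr h2
  · intro s hs
    have hmin := Tj_min f g (j := j) (s := s) hs
    simp only [FT]
    cases hd : decide (mstar f j ≤ s) with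
    | false => simp
    | true =>
      simp only [cond_true]
      rw [decide_eq_true_eq] at hd
      cases hall : allb g j (mstar f j) s with
      | false => rfl
      | true =>
        exfalso
        exact hmin ⟨hd, (allb_iff g j _ _).mp hall⟩

/-- running maximum as accumulated by `posList` -/
noncomputable def auxM : ℕ → ℕ := Nat.rec 0 (fun i ih => max ih (Tj f g i))

omit hmono hunb hanti hlim in
theorem auxM_succ (i : ℕ) : auxM f g (i+1) = maxT f g i := by
  induction i with
  | zero => show max (auxM f g 0) (Tj f g 0) = Tj f g 0; simp [auxM, maxT]
  | succ i ih =>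
    show max (auxM f g (i+1)) (Tj f g (i+1)) = maxT f g (i+1)
    rw [ih]; rfl

theorem posList_eq {n : ℕ} : ∀ {h : ℕ}, (∀ i < h, Tj f g i ≤ n) →
    posList g n h = some ((List.range h).map (Pj f g), auxM f g h) := by
  intro h
  induction h with
  | zero => intro _; rfl
  | succ h ih =>
    intro hn
    have hstep : posList g n (h+1) = (posList g n h).bind fun lm =>
        (findT g h n).map fun T =>
          (lm.1 ++ [2*(h+1) + max lm.2 T], max lm.2 T) := rfl
    rw [hstep, ih (fun i hi => hn i (by omega)),
      findT_eq f g hmono hunb hanti hlim (hn h (by omega))]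
    show some ((List.range h).map (Pj f g) ++
        [2*(h+1) + max (auxM f g h) (Tj f g h)], max (auxM f g h) (Tj f g h)) = _
    have hmax : max (auxM f g h) (Tj f g h) = auxM f g (h+1) := rfl
    rw [hmax, auxM_succ]
    have hlist : (List.range h).map (Pj f g) ++ [2*(h+1) + maxT f g h]
        = (List.range (h+1)).map (Pj f g) := by
      rw [List.range_succ, List.map_append]
      congr 1
    rw [hlist]

theorem dec_eq {n : ℕ} (v : Fin n → Bool)
    (hsupp : ∀ i : Fin n, v i = true → ∃ j, Pj f g j = i.1) :
    dec g (List.ofFn fun j : Fin (hh f g n) => v ⟨Pj f g j.1, (hh_iff f g).mp j.2⟩) n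
      = List.ofFn v := by
  set h := hh f g n with hh_def
  set w := List.ofFn fun j : Fin h => v ⟨Pj f g j.1, (hh_iff f g).mp j.2⟩ with hw
  have hwlen : w.length = h := by rw [hw, List.length_ofFn]
  have hTn : ∀ i < h, Tj f g i ≤ n := by
    intro i hi
    have h1 : Tj f g i ≤ Pj f g i := Tj_le_Pj f g (le_refl i)
    have h2 : Pj f g i < n := (hh_iff f g).mp hi
    omega
  have hl : posList g n w.length = some ((List.range h).map (Pj f g), auxM f g h) := by
    rw [hwlen]
    exact posList_eq f g hmono hunb hanti hlim hTn
  set l : List ℕ := (List.range h).map (Pj f g) with hldef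
  have hllen : l.length = h := by rw [hldef]; simp
  have hlget : ∀ j < h, l.get? j = some (Pj f g j) := by
    intro j hj
    rw [hldef, List.get?_eq_getElem?, List.getElem?_map, List.getElem?_range hj]
    rfl
  have hdec : dec g w n = (List.range n).map (fun t => bitAt l w t) := by
    unfold dec
    rw [hl]
    simp only [Option.getD_some]
    rw [buildL_eq]
  rw [hdec]
  apply List.ext_getElem
  · simp
  · intro t ht1 ht2
    rw [List.getElem_map, List.getElem_range]
    rw [List.getElem_ofFn]
    have htn : t < n := by simpa using ht2
    by_cases hex : ∃ j, j < h ∧ Pj f g j = t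
    · obtain ⟨j0, hj0, hPj0⟩ := hex
      have hfind : bfind FB (l, t) l.length = some j0 := by
        apply bfind_some_of
        · omega
        · simp only [FB]
          rw [hlget j0 hj0, hPj0]
          simp
        · intro j hj
          simp only [FB]
          rw [hlget j (by omega)]
          simp only [decide_eq_false_iff_not]
          intro hc
          have : Pj f g j = Pj f g j0 := by
            have := Option.some.inj hc
            omega
          have := (Pj_strictMono f g).injective this
          omega
      unfold bitAt
      rw [hfind]
      simp only [Option.casesOn]
      rw [hw, List.get?_eq_getElem?, List.getElem?_ofFn]
      have hj0' : j0 < (List.ofFn fun j : Fin h =>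
          v ⟨Pj f g j.1, (hh_iff f g).mp j.2⟩).length := by simpa using hj0
      rw [dif_pos hj0]
      simp only [Option.getD_some]
      congr 1
      exact Fin.ext (by simpa using hPj0)
    · push_neg at hex
      have hfind : bfind FB (l, t) l.length = none := by
        rw [bfind_none_iff]
        intro j hj
        simp only [FB]
        rw [hlget j (by omega)]
        simp only [decide_eq_false_iff_not]
        intro hc
        exact hex j (by omega) (Option.some.inj hc)
      unfold bitAt
      rw [hfind]
      simp only [Option.casesOn]
      by_contra hne
      have hv : v ⟨t, htn⟩ = true := by
        cases hvt : v ⟨t, htn⟩ with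
        | true => rfl
        | false => rw [hvt] at hne; exact absurd rfl hne
      obtain ⟨j, hj⟩ := hsupp ⟨t, htn⟩ hv
      have hjh : j < h := by
        rw [hh_def]
        apply (hh_iff f g).mpr
        simp only [hj]
        exact htn
      exact hex j hjh hj

end correctness
end NTC

namespace NTC
set_option linter.unusedSectionVars false
set_option maxHeartbeats 1000000

section machines

/-- is position `k` of `p` NOT a `true`? -/
def FH : List Bool → ℕ → Bool := fun p k => cond (decide (p.get? k = some true)) false true

/-- index of first non-`true` entry of `p` (or `p.length`) -/
def hdr (p : List Bool) : ℕ := (bfind FH p (p.length+1)).getD p.length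

/-- the data-bits block of `p` -/
def wof (p : List Bool) : List Bool :=
  buildL (fun p j => (p.get? (hdr p + 1 + j)).getD false) p (hdr p)

/-- the program block of `p` -/
def qof (p : List Bool) : List Bool :=
  buildL (fun p j => (p.get? (2*hdr p + 1 + j)).getD false) p (p.length - (2*hdr p + 1))

/-- wellformedness of the header -/
def okb (p : List Bool) : Bool :=
  cond (decide (p.get? (hdr p) = some false)) (decide (2*hdr p + 1 ≤ p.length)) false

theorem FH_computable : Computable₂ FH := by
  have H : Computable fun x : List Bool × ℕ =>
      cond (decide (x.1.get? x.2 = some true)) false true := by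
    apply Computable.cond _ (Computable.const false) (Computable.const true)
    apply Primrec.eq.decide.to_comp.comp
      (Computable.list_get?.comp Computable.fst Computable.snd)
      (Computable.const (some true))
  exact H

theorem hdr_computable : Computable hdr := by
  apply Computable.option_getD _ Computable.list_length
  exact (bfind_computable FH_computable).comp Computable.id
    (Computable.succ.comp Computable.list_length)

theorem wof_computable : Computable wof := by
  apply (buildL_computable ?hF).comp Computable.id hdr_computable
  case hF =>
    have H : Computable fun x : List Bool × ℕ =>
        (x.1.get? (hdr x.1 + 1 + x.2)).getD false := by
      apply Computable.option_getD _ (Computable.const false)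
      apply Computable.list_get?.comp Computable.fst
      exact Primrec.nat_add.to_comp.comp
        (Primrec.nat_add.to_comp.comp (hdr_computable.comp Computable.fst)
          (Computable.const 1)) Computable.snd
    exact H

theorem qof_computable : Computable qof := by
  have h2h : Computable fun p : List Bool => 2 * hdr p + 1 :=
    Primrec.nat_add.to_comp.comp
      (Primrec.nat_mul.to_comp.comp (Computable.const 2) hdr_computable)
      (Computable.const 1)
  apply (buildL_computable ?hF).comp Computable.id
    (Primrec.nat_sub.to_comp.comp Computable.list_length h2h)
  case hF =>
    have H : Computable fun x : List Bool × ℕ =>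
        (x.1.get? (2 * hdr x.1 + 1 + x.2)).getD false := by
      apply Computable.option_getD _ (Computable.const false)
      apply Computable.list_get?.comp Computable.fst
      exact Primrec.nat_add.to_comp.comp (h2h.comp Computable.fst) Computable.snd
    exact H

theorem okb_computable : Computable okb := by
  have h2h : Computable fun p : List Bool => 2 * hdr p + 1 :=
    Primrec.nat_add.to_comp.comp
      (Primrec.nat_mul.to_comp.comp (Computable.const 2) hdr_computable)
      (Computable.const 1)
  apply Computable.cond _ _ (Computable.const false)
  · apply Primrec.eq.decide.to_comp.comp
      (Computable.list_get?.comp Computable.id hdr_computable)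
      (Computable.const (some false))
  · exact Primrec.nat_le.decide.to_comp.comp h2h Computable.list_length

section honest

variable {h : ℕ} {w q : List Bool}

/-- shape of an honest input -/
def honest (h : ℕ) (w q : List Bool) : List Bool :=
  List.replicate h true ++ false :: (w ++ q)

theorem honest_length : (honest h w q).length = 2*h + 1 + q.length → True := fun _ => trivial

variable (hw : w.length = h)

include hw

theorem honest_len : (honest h w q).length = 2*h + 1 + q.length := by
  unfold honest
  simp only [List.length_append, List.length_replicate, List.length_cons]
  omega

theorem honest_get_lt {k : ℕ} (hk : k < h) : (honest h w q).get? k = some true := by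
  unfold honest
  rw [List.get?_eq_getElem?, List.getElem?_append_left (by simpa using hk)]
  simp [hk]

theorem honest_get_h : (honest h w q).get? h = some false := by
  unfold honest
  rw [List.get?_eq_getElem?,
    List.getElem?_append_right (by simp)]
  simp

theorem honest_get_w {j : ℕ} (hj : j < h) : (honest h w q).get? (h+1+j) = w.get? j := by
  unfold honest
  rw [List.get?_eq_getElem?,
    List.getElem?_append_right (by simp; omega)]
  have : h + 1 + j - (List.replicate h (true : Bool)).length = j + 1 := by simp; omega
  rw [this, List.getElem?_cons_succ, List.getElem?_append_left (by omega), List.get?_eq_getElem?]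

theorem honest_get_q {j : ℕ} : (honest h w q).get? (2*h+1+j) = q.get? j := by
  unfold honest
  rw [List.get?_eq_getElem?,
    List.getElem?_append_right (by simp; omega)]
  have : 2*h + 1 + j - (List.replicate h (true : Bool)).length = h + j + 1 := by simp; omega
  rw [this, List.getElem?_cons_succ, List.getElem?_append_right (by omega),
    List.get?_eq_getElem?]
  congr 1
  omega

theorem honest_hdr : hdr (honest h w q) = h := by
  have hlen := honest_len (q := q) hw
  have hb : bfind FH (honest h w q) ((honest h w q).length + 1) = some h := by
    apply bfind_some_of
    · omega
    · unfold FH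
      rw [honest_get_h hw]
      simp
    · intro j hj
      unfold FH
      rw [honest_get_lt hw hj]
      simp
  unfold hdr
  rw [hb]
  rfl

theorem honest_wof : wof (honest h w q) = w := by
  unfold wof
  rw [buildL_eq]
  simp only [honest_hdr hw]
  apply List.ext_getElem
  · simp [hw]
  · intro j hj1 hj2
    rw [List.getElem_map, List.getElem_range]
    have hjh : j < h := by simpa using hj1
    rw [honest_get_w hw hjh, List.get?_eq_getElem?, List.getElem?_eq_getElem (by omega)]
    rfl

theorem honest_qof : qof (honest h w q) = q := by
  unfold qof
  rw [buildL_eq]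
  simp only [honest_hdr hw]
  have hlen := honest_len (q := q) hw
  have hcount : (honest h w q).length - (2*h+1) = q.length := by omega
  rw [hcount]
  apply List.ext_getElem
  · simp
  · intro j hj1 hj2
    rw [List.getElem_map, List.getElem_range]
    rw [honest_get_q hw, List.get?_eq_getElem?, List.getElem?_eq_getElem (by simpa using hj2)]
    rfl

theorem honest_okb : okb (honest h w q) = true := by
  unfold okb
  rw [honest_hdr hw, honest_get_h hw]
  have hlen := honest_len (q := q) hw
  simp
  omega

end honest
end machines
end NTC

namespace NTC
set_option linter.unusedSectionVars false
set_option maxHeartbeats 1000000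

section mach

variable (g : ℕ → ℕ → ℕ) (U : BStr →. BStr)

/-- plain decoder machine -/
def Mach : BStr →. BStr := fun p => (U (qof p)).map fun y => dec g (wof p) y.length

/-- prefix-free decoder machine -/
def MachK : BStr →. BStr := fun p =>
  (Part.ofOption (cond (okb p) (some (qof p)) none)).bind fun q =>
    (U q).map fun y => dec g (wof p) y.length

variable {g U}

theorem Mach_partrec (hg : Computable₂ g) (hU : Partrec U) : Partrec (Mach g U) := by
  apply Partrec.map (hU.comp qof_computable)
  have H : Computable fun x : BStr × BStr => dec g (wof x.1) x.2.length :=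
    (dec_computable hg).comp (wof_computable.comp Computable.fst)
      (Computable.list_length.comp Computable.snd)
  exact H

theorem MachK_partrec (hg : Computable₂ g) (hU : Partrec U) : Partrec (MachK g U) := by
  apply Partrec.bind
  · apply Computable.ofOption
    apply Computable.cond okb_computable
      (Computable.option_some.comp qof_computable) (Computable.const none)
  · have H : Partrec fun x : BStr × BStr => (U x.2).map fun y => dec g (wof x.1) y.length := by
      apply Partrec.map (hU.comp Computable.snd)
      have H2 : Computable fun z : (BStr × BStr) × BStr => dec g (wof z.1.1) z.2.length :=
        (dec_computable hg).comp (wof_computable.comp (Computable.fst.comp Computable.fst))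
          (Computable.list_length.comp Computable.snd)
      exact H2
    exact H

theorem MachK_dom {p : BStr} (hdom : (MachK g U p).Dom) :
    okb p = true ∧ (U (qof p)).Dom := by
  obtain ⟨v, hv⟩ := Part.dom_iff_mem.mp hdom
  rw [MachK, Part.mem_bind_iff] at hv
  obtain ⟨a, ha, hv2⟩ := hv
  rw [Part.mem_ofOption] at ha
  cases hok : okb p with
  | false => rw [hok] at ha; simp at ha
  | true =>
    rw [hok] at ha
    simp only [cond_true, Option.mem_some_iff] at ha
    subst ha
    refine ⟨rfl, ?_⟩
    obtain ⟨y, hy, -⟩ := Part.mem_map_iff _ |>.mp hv2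
    exact Part.dom_iff_mem.mpr ⟨y, hy⟩

theorem okb_first_false {p : BStr} (hok : okb p = true) :
    p.get? (hdr p) = some false ∧ 2 * hdr p + 1 ≤ p.length := by
  unfold okb at hok
  cases h1 : decide (p.get? (hdr p) = some false) with
  | false => rw [h1] at hok; simp at hok
  | true =>
    rw [h1] at hok
    simp only [cond_true, decide_eq_true_eq] at hok
    rw [decide_eq_true_eq] at h1
    exact ⟨h1, hok⟩

theorem hdr_stable {p t : BStr} (h1 : p.get? (hdr p) = some false) (h2 : hdr p < p.length) :
    hdr (p ++ t) = hdr p := by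
  have hbp : bfind FH p (p.length + 1) = some (hdr p) := by
    cases hb : bfind FH p (p.length + 1) with
    | none =>
      exfalso
      have hh : hdr p = p.length := by unfold hdr; rw [hb]; rfl
      omega
    | some v' =>
      have hh : hdr p = v' := by unfold hdr; rw [hb]; rfl
      rw [hh]
  obtain ⟨hvlt, hFv, hFmin⟩ := bfind_some _ _ _ _ hbp
  have hget : ∀ j, j < p.length → (p ++ t).get? j = p.get? j := by
    intro j hj
    rw [List.get?_eq_getElem?, List.get?_eq_getElem?, List.getElem?_append_left hj]
  have hb' : bfind FH (p ++ t) ((p ++ t).length + 1) = some (hdr p) := by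
    apply bfind_some_of
    · rw [List.length_append]; omega
    · unfold FH
      rw [hget (hdr p) h2, h1]
      simp
    · intro j hj
      have hFj := hFmin j hj
      unfold FH at hFj ⊢
      rw [hget j (by omega)]
      cases hd : decide (p.get? j = some true) with
      | false =>
        simp at hFj
        rw [decide_eq_false_iff_not, List.get?_eq_getElem?] at hd
        exact absurd hFj hd
      | true => rfl
  show (bfind FH (p ++ t) ((p ++ t).length + 1)).getD (p ++ t).length = hdr p
  rw [hb']
  rfl

theorem qof_length (p : BStr) : (qof p).length = p.length - (2 * hdr p + 1) := by
  unfold qof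
  rw [buildL_eq]
  simp

theorem qof_stable {p t : BStr} (h1 : p.get? (hdr p) = some false)
    (h2 : 2 * hdr p + 1 ≤ p.length) : qof p <+: qof (p ++ t) := by
  have hdr' : hdr (p ++ t) = hdr p := hdr_stable h1 (by omega)
  unfold qof
  rw [buildL_eq, buildL_eq]
  simp only [hdr']
  have hlen : (p ++ t).length - (2 * hdr p + 1) = (p.length - (2 * hdr p + 1)) + t.length := by
    rw [List.length_append]; omega
  rw [hlen, List.range_add, List.map_append]
  have hcongr : (List.range (p.length - (2*hdr p+1))).map
        (fun j => ((p ++ t).get? (2*hdr p + 1 + j)).getD false)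
      = (List.range (p.length - (2*hdr p+1))).map
        (fun j => (p.get? (2*hdr p + 1 + j)).getD false) := by
    apply List.map_congr_left
    intro j hj
    rw [List.mem_range] at hj
    rw [List.get?_eq_getElem?, List.get?_eq_getElem?, List.getElem?_append_left (by omega)]
  rw [hcongr]
  exact List.prefix_append _ _

theorem MachK_prefixFree (hUpf : PrefixFreeDom U) : PrefixFreeDom (MachK g U) := by
  intro p p' hp hp' hpre
  obtain ⟨t, rfl⟩ := hpre
  obtain ⟨hok, hUdom⟩ := MachK_dom hp
  obtain ⟨hok', hUdom'⟩ := MachK_dom hp'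
  obtain ⟨h1, h2⟩ := okb_first_false hok
  have hqpre : qof p <+: qof (p ++ t) := qof_stable h1 h2
  have hqeq : qof p = qof (p ++ t) := hUpf _ _ hUdom hUdom' hqpre
  have hlen : (qof p).length = (qof (p ++ t)).length := by rw [hqeq]
  rw [qof_length, qof_length, hdr_stable h1 (by omega), List.length_append] at hlen
  have ht : t.length = 0 := by omega
  rw [List.length_eq_zero_iff] at ht
  rw [ht, List.append_nil]

end mach

section cpxlemmas

theorem cpx_le_of_mem {U : BStr →. BStr} {x q : BStr} (hq : x ∈ U q) : cpx U x ≤ q.length :=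
  Nat.sInf_le ⟨q, rfl, hq⟩

theorem cpx_witness {U : BStr →. BStr} {x : BStr} (hne : ∃ q, x ∈ U q) :
    ∃ q : BStr, q.length = cpx U x ∧ x ∈ U q := by
  have h2 : {n | ∃ q : BStr, q.length = n ∧ x ∈ U q}.Nonempty := by
    obtain ⟨q, hq⟩ := hne
    exact ⟨q.length, q, rfl, hq⟩
  exact Nat.sInf_mem h2

theorem plain_ex {U : BStr →. BStr} (hU : UniversalPlain U) (x : BStr) : ∃ q, x ∈ U q := by
  obtain ⟨c, hc⟩ := hU.2 (fun p => Part.some p) (by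
    have H : Partrec (fun p : BStr => Part.some p) := Computable.id.partrec
    exact H)
  obtain ⟨q, -, hq⟩ := hc x x (Part.mem_some x)
  exact ⟨q, hq⟩

/-- wellformedness for the unary machine -/
def okOne (p : List Bool) : Bool :=
  cond (decide (p.get? (hdr p) = some false)) (decide (hdr p + 1 = p.length)) false

theorem okOne_computable : Computable okOne := by
  apply Computable.cond _ _ (Computable.const false)
  · apply Primrec.eq.decide.to_comp.comp
      (Computable.list_get?.comp Computable.id hdr_computable)
      (Computable.const (some false))
  · apply Primrec.eq.decide.to_comp.comp
      (Computable.succ.comp hdr_computable) Computable.list_length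

theorem numStr_computable : Computable numStr := by
  have H : Computable fun n : ℕ => buildL (fun (_ : ℕ) (_ : ℕ) => (false : Bool)) 0 n :=
    (buildL_computable ((Computable.const false).to₂ (β := ℕ))).comp
      (Computable.const 0) Computable.id
  apply H.of_eq
  intro n
  induction n with
  | zero => rfl
  | succ n ih =>
    show buildL (fun (_ : ℕ) (_ : ℕ) => (false : Bool)) 0 n ++ [false] = _
    rw [ih]
    unfold numStr
    rw [List.replicate_succ']

/-- machine with prefix-free domain whose range contains all `numStr n` -/
def M1 : BStr →. BStr := fun p =>
  Part.ofOption (cond (okOne p) (some (numStr (p.length - 1))) none)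

theorem M1_partrec : Partrec M1 := by
  apply Computable.ofOption
  apply Computable.cond okOne_computable _ (Computable.const none)
  exact Computable.option_some.comp
    (numStr_computable.comp (Computable.pred.comp Computable.list_length))

theorem okOne_first_false {p : BStr} (hok : okOne p = true) :
    p.get? (hdr p) = some false ∧ hdr p + 1 = p.length := by
  unfold okOne at hok
  cases h1 : decide (p.get? (hdr p) = some false) with
  | false => rw [h1] at hok; simp at hok
  | true =>
    rw [h1] at hok
    simp only [cond_true, decide_eq_true_eq] at hok
    rw [decide_eq_true_eq] at h1
    exact ⟨h1, hok⟩

theorem M1_dom {p : BStr} (h : (M1 p).Dom) : okOne p = true := by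
  obtain ⟨v, hv⟩ := Part.dom_iff_mem.mp h
  rw [M1, Part.mem_ofOption] at hv
  cases hok : okOne p with
  | false => rw [hok] at hv; simp at hv
  | true => rfl

theorem M1_prefixFree : PrefixFreeDom M1 := by
  intro p p' hp hp' hpre
  obtain ⟨t, rfl⟩ := hpre
  obtain ⟨h1, h2⟩ := okOne_first_false (M1_dom hp)
  obtain ⟨h1', h2'⟩ := okOne_first_false (M1_dom hp')
  have hdr' : hdr (p ++ t) = hdr p := hdr_stable h1 (by omega)
  rw [hdr', List.length_append] at h2'
  have ht : t.length = 0 := by omega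
  rw [List.length_eq_zero_iff] at ht
  rw [ht, List.append_nil]

theorem unary_get_lt {n k : ℕ} (hk : k < n) :
    (List.replicate n true ++ [false]).get? k = some true := by
  rw [List.get?_eq_getElem?, List.getElem?_append_left (by simpa using hk)]
  simp [hk]

theorem unary_get_n (n : ℕ) : (List.replicate n true ++ [false]).get? n = some false := by
  rw [List.get?_eq_getElem?, List.getElem?_append_right (by simp)]
  simp

theorem unary_hdr (n : ℕ) : hdr (List.replicate n true ++ [false]) = n := by
  have hlen : (List.replicate n (true : Bool) ++ [false]).length = n + 1 := by simp
  have hb : bfind FH (List.replicate n true ++ [false])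
      ((List.replicate n (true : Bool) ++ [false]).length + 1) = some n := by
    apply bfind_some_of
    · omega
    · unfold FH; rw [unary_get_n]; simp
    · intro j hj
      unfold FH; rw [unary_get_lt hj]; simp
  unfold hdr
  rw [hb]
  rfl

theorem M1_value (n : ℕ) : numStr n ∈ M1 (List.replicate n true ++ [false]) := by
  have hok : okOne (List.replicate n true ++ [false]) = true := by
    unfold okOne
    rw [unary_hdr, unary_get_n]
    simp
  rw [M1, Part.mem_ofOption, hok]
  have hlen : (List.replicate n (true : Bool) ++ [false]).length = n + 1 := by simp
  rw [hlen]
  simp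

theorem prefix_ex {U : BStr →. BStr} (hU : UniversalPrefixFree U) (n : ℕ) :
    ∃ q, numStr n ∈ U q := by
  obtain ⟨c, hc⟩ := hU.2.2 M1 M1_partrec M1_prefixFree
  obtain ⟨q, -, hq⟩ := hc _ _ (M1_value n)
  exact ⟨q, hq⟩

end cpxlemmas
end NTC

namespace NTC
set_option linter.unusedSectionVars false
set_option maxHeartbeats 1000000

section bounds

variable (f : ℕ → ℕ) (g : ℕ → ℕ → ℕ)
variable (hmono : Monotone f) (hunb : ∀ b : ℕ, ∃ n, b < f n)
  (hanti : ∀ n s, g n (s + 1) ≤ g n s)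
  (hlim : ∀ n, ∃ s₀, ∀ s ≥ s₀, g n s = f n)

/-- the data bits of a supported level-`n` string -/
noncomputable def wfn {n : ℕ} (v : Fin n → Bool) : List Bool :=
  List.ofFn fun j : Fin (hh f g n) => v ⟨Pj f g j.1, (hh_iff f g).mp j.2⟩

theorem wfn_length {n : ℕ} (v : Fin n → Bool) : (wfn f g v).length = hh f g n :=
  List.length_ofFn

include hmono hunb hanti hlim in
theorem dec_wfn {n : ℕ} (v : Fin n → Bool)
    (hsupp : ∀ i : Fin n, v i = true → ∃ j, Pj f g j = i.1) :
    dec g (wfn f g v) n = List.ofFn v :=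
  dec_eq f g hmono hunb hanti hlim v hsupp

include hmono hunb hanti hlim in
theorem honest_mem_Mach {U : BStr →. BStr} {n : ℕ} (v : Fin n → Bool)
    (hsupp : ∀ i : Fin n, v i = true → ∃ j, Pj f g j = i.1)
    {q0 : BStr} (hq0 : numStr n ∈ U q0) :
    List.ofFn v ∈ Mach g U (honest (hh f g n) (wfn f g v) q0) := by
  have hwlen := wfn_length f g v
  have hM : Mach g U (honest (hh f g n) (wfn f g v) q0)
      = (U q0).map fun y => dec g (wfn f g v) y.length := by
    unfold Mach
    rw [honest_qof hwlen, honest_wof hwlen]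
  rw [hM]
  have hmem : dec g (wfn f g v) (List.length (numStr n)) ∈
      Part.map (fun y : BStr => dec g (wfn f g v) y.length) (U q0) :=
    Part.mem_map (fun y : BStr => dec g (wfn f g v) y.length) hq0
  have hx : dec g (wfn f g v) (numStr n).length = List.ofFn v := by
    have hl : (numStr n).length = n := List.length_replicate
    rw [hl]
    exact dec_wfn f g hmono hunb hanti hlim v hsupp
  rwa [hx] at hmem

include hmono hunb hanti hlim in
theorem honest_mem_MachK {U : BStr →. BStr} {n : ℕ} (v : Fin n → Bool)
    (hsupp : ∀ i : Fin n, v i = true → ∃ j, Pj f g j = i.1)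
    {q0 : BStr} (hq0 : numStr n ∈ U q0) :
    List.ofFn v ∈ MachK g U (honest (hh f g n) (wfn f g v) q0) := by
  have hwlen := wfn_length f g v
  unfold MachK
  rw [Part.mem_bind_iff]
  refine ⟨q0, ?_, ?_⟩
  · rw [honest_okb hwlen, honest_qof hwlen]
    simp [Part.mem_ofOption]
  · rw [honest_wof hwlen]
    have hmem : dec g (wfn f g v) (List.length (numStr n)) ∈
        Part.map (fun y : BStr => dec g (wfn f g v) y.length) (U q0) :=
      Part.mem_map (fun y : BStr => dec g (wfn f g v) y.length) hq0
    have hx : dec g (wfn f g v) (numStr n).length = List.ofFn v := by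
      have hl : (numStr n).length = n := List.length_replicate
      rw [hl]
      exact dec_wfn f g hmono hunb hanti hlim v hsupp
    rwa [hx] at hmem

include hmono hunb hanti hlim in
theorem plain_bound (hg : Computable₂ g) {U : BStr →. BStr} (hU : UniversalPlain U) :
    ∃ cV : ℕ, ∀ (n : ℕ) (v : Fin n → Bool),
      (∀ i : Fin n, v i = true → ∃ j, Pj f g j = i.1) →
      cpx U (List.ofFn v) ≤ cpxN U n + f n + cV := by
  obtain ⟨cM, hcM⟩ := hU.2 (Mach g U) (Mach_partrec hg hU.1)
  refine ⟨cM + 1, fun n v hsupp => ?_⟩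
  obtain ⟨q0, hq0len, hq0⟩ := cpx_witness (plain_ex hU (numStr n))
  have hmem := honest_mem_Mach f g hmono hunb hanti hlim v hsupp hq0
  obtain ⟨q, hqlen, hq⟩ := hcM _ _ hmem
  have hc := cpx_le_of_mem hq
  have hplen : (honest (hh f g n) (wfn f g v) q0).length = 2 * hh f g n + 1 + q0.length :=
    honest_len (wfn_length f g v)
  have h2h : 2 * hh f g n ≤ f n := f_ge_two_hh f g hmono hunb hanti hlim n
  have : cpxN U n = cpx U (numStr n) := rfl
  omega

include hmono hunb hanti hlim in
theorem prefix_bound (hg : Computable₂ g) {U : BStr →. BStr} (hU : UniversalPrefixFree U) :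
    ∃ cV : ℕ, ∀ (n : ℕ) (v : Fin n → Bool),
      (∀ i : Fin n, v i = true → ∃ j, Pj f g j = i.1) →
      cpx U (List.ofFn v) ≤ cpxN U n + f n + cV := by
  obtain ⟨cM, hcM⟩ := hU.2.2 (MachK g U) (MachK_partrec hg hU.1) (MachK_prefixFree hU.2.1)
  refine ⟨cM + 1, fun n v hsupp => ?_⟩
  obtain ⟨q0, hq0len, hq0⟩ := cpx_witness (prefix_ex hU n)
  have hmem := honest_mem_MachK f g hmono hunb hanti hlim v hsupp hq0
  obtain ⟨q, hqlen, hq⟩ := hcM _ _ hmem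
  have hc := cpx_le_of_mem hq
  have hplen : (honest (hh f g n) (wfn f g v) q0).length = 2 * hh f g n + 1 + q0.length :=
    honest_len (wfn_length f g v)
  have h2h : 2 * hh f g n ≤ f n := f_ge_two_hh f g hmono hunb hanti hlim n
  have : cpxN U n = cpx U (numStr n) := rfl
  omega

end bounds
end NTC


/-- for every nondecreasing unbounded `f : ℕ → ℕ` that is
recursively approximable from above, there is a nonatomic measure `μ` with
`C(μ↾n) ≤⁺ C(n) + f(n)` and `K(μ↾n) ≤⁺ K(n) + f(n)`. -/
theorem nonatomic_measure_with_near_trivial_complexity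
    (U UK : BStr →. BStr) (hU : UniversalPlain U) (hUK : UniversalPrefixFree UK)
    (f : ℕ → ℕ) (hmono : Monotone f) (hunb : ∀ b : ℕ, ∃ n, b < f n)
    (g : ℕ → ℕ → ℕ) (hg : Computable₂ g)
    (hanti : ∀ n s, g n (s + 1) ≤ g n s)
    (hlim : ∀ n, ∃ s₀, ∀ s ≥ s₀, g n s = f n) :
    ∃ μ : Measure Cantor, IsProbabilityMeasure μ ∧
      (∀ Z : Cantor, μ {Z} = 0) ∧
      (∃ c : ℝ, ∀ n : ℕ, avgCpx U μ n ≤ (cpxN U n : ℝ) + (f n : ℝ) + c) ∧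
      (∃ c : ℝ, ∀ n : ℕ, avgCpx UK μ n ≤ (cpxN UK n : ℝ) + (f n : ℝ) + c) := by

  classical
  haveI hprob : IsProbabilityMeasure (NTC.mu f g) := NTC.mu_prob f g
  have avg_of_cpx_bound : ∀ (V : BStr →. BStr) (cV : ℕ),
      (∀ (n : ℕ) (v : Fin n → Bool),
        (∀ i : Fin n, v i = true → ∃ j, NTC.Pj f g j = i.1) →
        cpx V (List.ofFn v) ≤ cpxN V n + f n + cV) →
      ∃ c : ℝ, ∀ n : ℕ, avgCpx V (NTC.mu f g) n ≤ (cpxN V n : ℝ) + (f n : ℝ) + c := by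
    intro V cV hcpx
    refine ⟨(cV : ℝ), fun n => ?_⟩
    set B : ℝ := (cpxN V n : ℝ) + (f n : ℝ) + (cV : ℝ) with hB
    have hBnn : 0 ≤ B := by positivity
    have hterm : ∀ v : Fin n → Bool,
        (cpx V (List.ofFn v) : ℝ) * (NTC.mu f g (cyl (List.ofFn v))).toReal ≤
          B * (NTC.mu f g (cyl (List.ofFn v))).toReal := by
      intro v
      by_cases hs : ∀ i : Fin n, v i = true → ∃ j, NTC.Pj f g j = i.1
      · apply mul_le_mul_of_nonneg_right _ ENNReal.toReal_nonneg
        have h1 := hcpx n v hs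
        rw [hB]
        push_cast
        exact_mod_cast h1
      · have hns : ¬ NTC.Supported f g (List.ofFn v) := by
          intro hsup
          apply hs
          intro i hi
          have hilt : i.1 < (List.ofFn v).length := by simpa using i.2
          have hget : (List.ofFn v).get ⟨i.1, hilt⟩ = v i := by
            rw [List.get_ofFn]
            exact congrArg v (Fin.ext (by simp))
          exact hsup ⟨i.1, hilt⟩ (by rw [hget]; exact hi)
        rw [NTC.mu_cyl_unsupported f g hns]
        simp
    have hsum : ∑ v : Fin n → Bool, (NTC.mu f g (cyl (List.ofFn v))).toReal ≤ 1 := by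
      have h1 : ∑ v : Fin n → Bool, (NTC.mu f g (cyl (List.ofFn v))).toReal
          = (∑ v : Fin n → Bool, NTC.mu f g (cyl (List.ofFn v))).toReal := by
        rw [ENNReal.toReal_sum]
        intro v _
        exact measure_ne_top _ _
      rw [h1]
      calc (∑ v : Fin n → Bool, NTC.mu f g (cyl (List.ofFn v))).toReal
          ≤ (1 : ENNReal).toReal := ENNReal.toReal_mono (by simp) (NTC.mu_sum_le f g n)
        _ = 1 := by simp
    calc avgCpx V (NTC.mu f g) n
        ≤ ∑ v : Fin n → Bool, B * (NTC.mu f g (cyl (List.ofFn v))).toReal :=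
          Finset.sum_le_sum (fun v _ => hterm v)
      _ = B * ∑ v : Fin n → Bool, (NTC.mu f g (cyl (List.ofFn v))).toReal := by
          rw [Finset.mul_sum]
      _ ≤ B * 1 := mul_le_mul_of_nonneg_left hsum hBnn
      _ = B := mul_one B
  obtain ⟨cP, hcP⟩ := NTC.plain_bound f g hmono hunb hanti hlim hg hU
  obtain ⟨cK, hcK⟩ := NTC.prefix_bound f g hmono hunb hanti hlim hg hUK
  exact ⟨NTC.mu f g, hprob, fun Z => NTC.mu_singleton f g hmono hunb hanti hlim Z,
    avg_of_cpx_bound U cP hcP, avg_of_cpx_bound UK cK hcK⟩
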